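/- Assume the maps x ↦ Φ(|x|), v ↦ G(v) and x ↦ F(|x|²)x are locally Lipschitz on ℝ^d. Let T, R > 0, let (f_t)_{t∈[0,T]} and (g_t)_{t∈[0,T]} be families of Borel probability measures on ℝ^d × ℝ^d supported in the ball B_R of ℝ^{2d}, and suppose that for every t ∈ [0,T] the map (x,v) ↦ H_[f_t](x,v) is Lipschitz on B_R with constant L_R (uniform in t). Let (X₁,V₁), (X₂,V₂) : [0,T] → ℝ^d × ℝ^d be differentiable curves with the same initial datum (x₀,v₀), remaining in B_R, and satisfying X₁'(t) = V₁(t), V₁'(t) = H_[f_t](X₁(t),V₁(t)) and X₂'(t) = V₂(t), V₂'(t) = H_[g_t](X₂(t),V₂(t)). Then, with C_R = 1 + L_R, for all t ∈ [0,T]: |(X₁(t),V₁(t)) − (X₂(t),V₂(t))| ≤ ((e^{C_R t} − 1)/C_R) · sup_{s∈[0,T]} sup_{(x,v)∈B_R} |H_[f_s](x,v) − H_[g_s](x,v)|. -/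

import Mathlib

open MeasureTheory Filter
open scoped RealInnerProductSpace BigOperators ENNReal

noncomputable section

abbrev Euc (d : ℕ) := EuclideanSpace ℝ (Fin d)

abbrev Phase (d : ℕ) := Euc d × Euc d

/-- Euclidean norm on the phase space ℝ^d × ℝ^d ≅ ℝ^{2d}. -/
noncomputable def pnorm {d : ℕ} (z : Phase d) : ℝ :=
  Real.sqrt (‖z.1‖ ^ 2 + ‖z.2‖ ^ 2)

/-- Closed ball of radius `R` (Euclidean norm) in the phase space ℝ^{2d}. -/
def pball (d : ℕ) (R : ℝ) : Set (Phase d) := {z | pnorm z ≤ R}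

/-- Velocity fluctuation 𝒢[f]. -/
noncomputable def velFluc {d : ℕ} (f : Measure (Phase d)) : ℝ :=
  (∫ z, ‖z.2‖ ^ 2 ∂f) - ‖∫ z, z.2 ∂f‖ ^ 2

/-- Position fluctuation Γ[f]. -/
noncomputable def posFluc {d : ℕ} (f : Measure (Phase d)) : ℝ :=
  (∫ z, ‖z.1‖ ^ 2 ∂f) - ‖∫ z, z.1 ∂f‖ ^ 2

/-- Interaction field H_[f]. -/
noncomputable def Hfield {d : ℕ} (Φ : ℝ → ℝ) (G : Euc d → Euc d) (F : ℝ → ℝ) (α : ℝ)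
    (f : Measure (Phase d)) (x v : Euc d) : Euc d :=
  - (∫ z, Φ ‖x - z.1‖ • G (v - z.2) ∂f)
    + velFluc f ^ ((2 * α - 1) / 2) • ∫ z, F (‖x - z.1‖ ^ 2) • (x - z.1) ∂f

/-- A family of compactly supported Borel probability measures is a weak solution of the
kinetic flocking equation on the time set `I` if for every `C¹` test function `φ` the map
`t ↦ ∫ φ d f_t` is differentiable (within `I`) with the stated derivative. -/
def IsWeakSolution {d : ℕ} (Φ : ℝ → ℝ) (G : Euc d → Euc d) (F : ℝ → ℝ) (α : ℝ)
    (I : Set ℝ) (f : ℝ → Measure (Phase d)) : Prop :=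
  (∀ t ∈ I, IsProbabilityMeasure (f t) ∧ ∃ K : Set (Phase d), IsCompact K ∧ f t Kᶜ = 0) ∧
  ∀ φ : Phase d → ℝ, ContDiff ℝ 1 φ → ∀ t ∈ I,
    HasDerivWithinAt (fun s => ∫ z, φ z ∂(f s))
      (∫ z, fderiv ℝ φ z (z.2, Hfield Φ G F α (f t) z.1 z.2) ∂(f t)) I t

/-- Measure-valued solution of the kinetic flocking equation on a time set `I ∋ 0`,
given by a family of compactly supported probability measures together with a flow map `𝒯`. -/
def IsMVSolution {d : ℕ} (Φ : ℝ → ℝ) (G : Euc d → Euc d) (F : ℝ → ℝ) (α : ℝ)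
    (I : Set ℝ) (f₀ : Measure (Phase d)) (f : ℝ → Measure (Phase d))
    (T : ℝ → Phase d → Phase d) : Prop :=
  (0 : ℝ) ∈ I ∧
  ContinuousOn (fun p : ℝ × Phase d => T p.1 p.2) (I ×ˢ Set.univ) ∧
  T 0 = id ∧
  (∀ t ∈ I, IsProbabilityMeasure (f t) ∧ ∃ K : Set (Phase d), IsCompact K ∧ f t Kᶜ = 0) ∧
  (∀ z₀ : Phase d, ∀ t ∈ I,
    HasDerivWithinAt (fun s => T s z₀)
      ((T t z₀).2, Hfield Φ G F α (f t) (T t z₀).1 (T t z₀).2) I t) ∧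
  (∀ t ∈ I, f t = f₀.map (T t))

/-- `π` is a coupling of `f` and `g`. -/
def IsCoupling {d : ℕ} (π : Measure (Phase d × Phase d)) (f g : Measure (Phase d)) : Prop :=
  π.map Prod.fst = f ∧ π.map Prod.snd = g

/-- The Monge–Kantorovich–Rubinstein distance W₁ (with the Euclidean cost on ℝ^{2d}). -/
noncomputable def W1 {d : ℕ} (f g : Measure (Phase d)) : ℝ :=
  sInf {c : ℝ | ∃ π : Measure (Phase d × Phase d), IsProbabilityMeasure π ∧ IsCoupling π f g ∧
    Integrable (fun p => pnorm (p.1 - p.2)) π ∧ c = ∫ p, pnorm (p.1 - p.2) ∂π}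

end



section Aux

lemma pnorm_eq_withLp {d : ℕ} (z : Phase d) :
    pnorm z = ‖(WithLp.equiv 2 (Euc d × Euc d)).symm z‖ := by
  rw [WithLp.prod_norm_eq_of_nat 2 (by norm_num)]
  change _ = (‖z.1‖ ^ 2 + ‖z.2‖ ^ 2) ^ (1 / ((2 : ℕ) : ℝ))
  rw [pnorm, Real.sqrt_eq_rpow]
  norm_num

lemma pnorm_snd_le' {d : ℕ} (z : Phase d) : ‖z.2‖ ≤ pnorm z :=
  Real.le_sqrt_of_sq_le (by nlinarith [sq_nonneg ‖z.1‖])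

lemma pnorm_le_add' {d : ℕ} (z : Phase d) : pnorm z ≤ ‖z.1‖ + ‖z.2‖ := by
  have h : (‖z.1‖ ^ 2 + ‖z.2‖ ^ 2 : ℝ) ≤ (‖z.1‖ + ‖z.2‖) ^ 2 := by
    nlinarith [norm_nonneg z.1, norm_nonneg z.2]
  calc pnorm z ≤ Real.sqrt ((‖z.1‖ + ‖z.2‖) ^ 2) := Real.sqrt_le_sqrt h
    _ = ‖z.1‖ + ‖z.2‖ := Real.sqrt_sq (by positivity)

end Aux

/-- stability of characteristics driven by two interaction fields. -/
theorem stmt1 {d : ℕ} (hd : 1 ≤ d) (Φ F : ℝ → ℝ) (G : Euc d → Euc d) (α : ℝ)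
    (hΦc : Continuous Φ) (hGc : Continuous G) (hFc : Continuous F)
    (hα : 1 ≤ α ∧ α < 3 / 2)
    (hΦlip : LocallyLipschitz (fun x : Euc d => Φ ‖x‖))
    (hGlip : LocallyLipschitz G)
    (hFlip : LocallyLipschitz (fun x : Euc d => F (‖x‖ ^ 2) • x))
    (T R : ℝ) (hT : 0 < T) (hR : 0 < R)
    (f g : ℝ → Measure (Phase d))
    (hfprob : ∀ t ∈ Set.Icc (0 : ℝ) T, IsProbabilityMeasure (f t))
    (hgprob : ∀ t ∈ Set.Icc (0 : ℝ) T, IsProbabilityMeasure (g t))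
    (hfsupp : ∀ t ∈ Set.Icc (0 : ℝ) T, f t (pball d R)ᶜ = 0)
    (hgsupp : ∀ t ∈ Set.Icc (0 : ℝ) T, g t (pball d R)ᶜ = 0)
    (L : ℝ) (hL : 0 ≤ L)
    (hLip : ∀ t ∈ Set.Icc (0 : ℝ) T, ∀ z₁ ∈ pball d R, ∀ z₂ ∈ pball d R,
      ‖Hfield Φ G F α (f t) z₁.1 z₁.2 - Hfield Φ G F α (f t) z₂.1 z₂.2‖ ≤ L * pnorm (z₁ - z₂))
    (Z₁ Z₂ : ℝ → Phase d)
    (hinit : Z₁ 0 = Z₂ 0)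
    (hZ₁mem : ∀ t ∈ Set.Icc (0 : ℝ) T, Z₁ t ∈ pball d R)
    (hZ₂mem : ∀ t ∈ Set.Icc (0 : ℝ) T, Z₂ t ∈ pball d R)
    (hZ₁ : ∀ t ∈ Set.Icc (0 : ℝ) T,
      HasDerivWithinAt Z₁ ((Z₁ t).2, Hfield Φ G F α (f t) (Z₁ t).1 (Z₁ t).2) (Set.Icc 0 T) t)
    (hZ₂ : ∀ t ∈ Set.Icc (0 : ℝ) T,
      HasDerivWithinAt Z₂ ((Z₂ t).2, Hfield Φ G F α (g t) (Z₂ t).1 (Z₂ t).2) (Set.Icc 0 T) t)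
    (M : ℝ)
    (hM : ∀ s ∈ Set.Icc (0 : ℝ) T, ∀ z ∈ pball d R,
      ‖Hfield Φ G F α (f s) z.1 z.2 - Hfield Φ G F α (g s) z.1 z.2‖ ≤ M) :
    ∀ t ∈ Set.Icc (0 : ℝ) T,
      pnorm (Z₁ t - Z₂ t) ≤ (Real.exp ((1 + L) * t) - 1) / (1 + L) * M := by
  intro t ht
  have hKpos : (0:ℝ) < 1 + L := by linarith
  set e := (WithLp.prodContinuousLinearEquiv 2 ℝ (Euc d) (Euc d)).symm with he_def
  have he : ∀ z : Phase d, pnorm z = ‖e z‖ := fun z => by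
    rw [pnorm_eq_withLp]; rfl
  set D : ℝ → Phase d := fun s =>
    ((Z₁ s).2, Hfield Φ G F α (f s) (Z₁ s).1 (Z₁ s).2)
      - ((Z₂ s).2, Hfield Φ G F α (g s) (Z₂ s).1 (Z₂ s).2) with hD
  haveI : ContinuousSMul ℝ (WithLp 2 (Euc d × Euc d)) := IsBoundedSMul.continuousSMul
  have hderiv : ∀ s ∈ Set.Icc (0:ℝ) T,
      HasDerivWithinAt (fun u => e (Z₁ u - Z₂ u)) (e (D s)) (Set.Icc 0 T) s := by
    intro s hs
    exact e.toContinuousLinearMap.hasFDerivAt.comp_hasDerivWithinAt s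
      ((hZ₁ s hs).sub (hZ₂ s hs))
  have hMnn : 0 ≤ M := by
    have h0 : (0:ℝ) ∈ Set.Icc (0:ℝ) T := ⟨le_refl 0, hT.le⟩
    have := hM 0 h0 (Z₂ 0) (hZ₂mem 0 h0)
    exact (norm_nonneg _).trans this
  have key := norm_le_gronwallBound_of_norm_deriv_right_le
    (f := fun u => e (Z₁ u - Z₂ u)) (f' := fun s => e (D s))
    (δ := 0) (K := 1 + L) (ε := M) (a := 0) (b := T)
    (fun s hs => (hderiv s hs).continuousWithinAt)
    (fun s hs => (hderiv s (Set.Ico_subset_Icc_self hs)).mono_of_mem_nhdsWithin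
      (Icc_mem_nhdsGE_of_mem hs))
    ?_ ?_ t ht
  · rw [← he, gronwallBound_of_K_ne_0 hKpos.ne'] at key
    simp only [zero_mul, zero_add, sub_zero] at key
    calc pnorm (Z₁ t - Z₂ t) ≤ M / (1 + L) * (Real.exp ((1 + L) * t) - 1) := key
      _ = (Real.exp ((1 + L) * t) - 1) / (1 + L) * M := by ring
  · -- initial condition
    simp only [hinit, sub_self, map_zero, norm_zero, le_refl]
  · -- norm of derivative bound
    intro s hs
    have hs' : s ∈ Set.Icc (0:ℝ) T := Set.Ico_subset_Icc_self hs
    rw [← he]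
    have hw : ‖(D s).1‖ ≤ pnorm (Z₁ s - Z₂ s) := by
      have : (D s).1 = (Z₁ s - Z₂ s).2 := rfl
      rw [this]
      exact pnorm_snd_le' _
    have hh : ‖(D s).2‖ ≤ L * pnorm (Z₁ s - Z₂ s) + M := by
      have hsplit : (D s).2 =
          (Hfield Φ G F α (f s) (Z₁ s).1 (Z₁ s).2 - Hfield Φ G F α (f s) (Z₂ s).1 (Z₂ s).2)
          + (Hfield Φ G F α (f s) (Z₂ s).1 (Z₂ s).2 - Hfield Φ G F α (g s) (Z₂ s).1 (Z₂ s).2) := by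
        show Hfield Φ G F α (f s) (Z₁ s).1 (Z₁ s).2 - Hfield Φ G F α (g s) (Z₂ s).1 (Z₂ s).2 = _
        abel
      rw [hsplit]
      refine (norm_add_le _ _).trans (add_le_add ?_ ?_)
      · exact hLip s hs' (Z₁ s) (hZ₁mem s hs') (Z₂ s) (hZ₂mem s hs')
      · exact hM s hs' (Z₂ s) (hZ₂mem s hs')
    calc pnorm (D s) ≤ ‖(D s).1‖ + ‖(D s).2‖ := pnorm_le_add' _
      _ ≤ pnorm (Z₁ s - Z₂ s) + (L * pnorm (Z₁ s - Z₂ s) + M) := add_le_add hw hh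
      _ = (1 + L) * pnorm (Z₁ s - Z₂ s) + M := by ring
      _ = (1 + L) * ‖e (Z₁ s - Z₂ s)‖ + M := by rw [he]
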